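/- Strong substate property bounds relative entropy: Let ρ and σ be quantum states on ℂ^n and let k be a real number. If the matrix σ − 2^{−k}·ρ is positive semidefinite (i.e., ρ/2^k ≤ σ in the Loewner order), then supp(ρ) ⊆ supp(σ) and S(ρ‖σ) ≤ k. -/

import Mathlib

open Matrix BigOperators
open scoped ComplexOrder

noncomputable section

/-- A quantum state: positive semidefinite matrix with unit trace. -/
def IsState {d : Type*} [Fintype d] (ρ : Matrix d d ℂ) : Prop :=
  ρ.PosSemidef ∧ ρ.trace = 1

/-- `SuppLE ρ σ` : the support of `ρ` is contained in the support of `σ`,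
expressed as inclusion of kernels the other way. -/
def SuppLE {d : Type*} [Fintype d] (ρ σ : Matrix d d ℂ) : Prop :=
  ∀ v : d → ℂ, σ *ᵥ v = 0 → ρ *ᵥ v = 0

/-- Matrix logarithm: apply `Real.log` to the eigenvalues (with `log 0 = 0`). -/
noncomputable def matLog {d : Type*} [Fintype d] [DecidableEq d]
    (ρ : Matrix d d ℂ) : Matrix d d ℂ :=
  if h : ρ.IsHermitian then
    (h.eigenvectorUnitary : Matrix d d ℂ) *
      Matrix.diagonal (fun i => (Real.log (h.eigenvalues i) : ℂ)) *
      (star (h.eigenvectorUnitary : Matrix d d ℂ))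
  else 0

/-- Quantum relative entropy `S(ρ‖σ) = Re Tr (ρ (log ρ - log σ))`. -/
noncomputable def relEnt {d : Type*} [Fintype d] [DecidableEq d]
    (ρ σ : Matrix d d ℂ) : ℝ :=
  (Matrix.trace (ρ * (matLog ρ - matLog σ))).re

/-- Trace norm of a Hermitian matrix: sum of absolute values of eigenvalues. -/
noncomputable def traceNorm {d : Type*} [Fintype d] [DecidableEq d]
    (A : Matrix d d ℂ) : ℝ :=
  if h : A.IsHermitian then ∑ i, |h.eigenvalues i| else 0

/-- Rank-one operator `|ψ⟩⟨ψ|`. -/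
def ketbra {d : Type*} (ψ : d → ℂ) : Matrix d d ℂ :=
  Matrix.of fun a b => ψ a * (starRingEnd ℂ) (ψ b)

/-- A POVM element: a positive semidefinite matrix `F` with `1 - F` positive semidefinite. -/
def IsPOVMElem {d : Type*} [Fintype d] [DecidableEq d] (F : Matrix d d ℂ) : Prop :=
  F.PosSemidef ∧ ((1 : Matrix d d ℂ) - F).PosSemidef

/-- `trR F ρ = Re Tr (F ρ)`. -/
noncomputable def trR {d : Type*} [Fintype d] (F ρ : Matrix d d ℂ) : ℝ :=
  (Matrix.trace (F * ρ)).re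

/-- Observational divergence `D(ρ‖σ)`. -/
noncomputable def obsDiv {d : Type*} [Fintype d] [DecidableEq d]
    (ρ σ : Matrix d d ℂ) : ℝ :=
  sSup {x : ℝ | ∃ F : Matrix d d ℂ, IsPOVMElem F ∧ trR F σ ≠ 0 ∧
    x = trR F ρ * Real.logb 2 (trR F ρ / trR F σ)}

/-- A probability distribution on `Fin n`. -/
def IsProbDist {n : ℕ} (P : Fin n → ℝ) : Prop :=
  (∀ i, 0 ≤ P i) ∧ ∑ i, P i = 1

/-- Classical relative entropy (base 2); terms with `P i = 0` contribute `0`. -/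
noncomputable def cRelEnt {n : ℕ} (P Q : Fin n → ℝ) : ℝ :=
  ∑ i, P i * Real.logb 2 (P i / Q i)

/-- Classical observational divergence. -/
noncomputable def cObsDiv {n : ℕ} (P Q : Fin n → ℝ) : ℝ :=
  sSup {x : ℝ | ∃ f : Fin n → ℝ, (∀ i, 0 ≤ f i ∧ f i ≤ 1) ∧
    (∑ i, f i * Q i) ≠ 0 ∧
    x = (∑ i, f i * P i) * Real.logb 2 ((∑ i, f i * P i) / (∑ i, f i * Q i))}


private lemma trace_dMdM {n : ℕ} (M : Matrix (Fin n) (Fin n) ℂ) (d e : Fin n → ℂ) :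
    Matrix.trace (Matrix.diagonal d * M * Matrix.diagonal e * star M)
      = ∑ i, ∑ j, d i * e j * ((Complex.normSq (M i j) : ℝ) : ℂ) := by
  simp only [Matrix.trace, Matrix.diag_apply, Matrix.mul_apply, Matrix.diagonal_apply,
    Matrix.conjTranspose_apply, ite_mul, zero_mul, mul_ite, mul_zero,
    Finset.sum_ite_eq, Finset.sum_ite_eq', Finset.mem_univ, if_true, Matrix.star_apply]
  refine Finset.sum_congr rfl fun i _ => Finset.sum_congr rfl fun j _ => ?_
  rw [← Complex.mul_conj, Complex.star_def]
  ring

private lemma trace_sandwich {n : ℕ} (U V : Matrix (Fin n) (Fin n) ℂ) (d e : Fin n → ℂ) :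
    Matrix.trace (U * Matrix.diagonal d * star U * (V * Matrix.diagonal e * star V))
      = ∑ i, ∑ j, d i * e j * ((Complex.normSq ((star U * V) i j) : ℝ) : ℂ) := by
  rw [← trace_dMdM (star U * V) d e]
  rw [show U * Matrix.diagonal d * star U * (V * Matrix.diagonal e * star V)
      = U * (Matrix.diagonal d * (star U * V) * Matrix.diagonal e * star V) by
    simp only [Matrix.mul_assoc]]
  rw [Matrix.trace_mul_comm]
  rw [show star (star U * V) = star V * U by rw [StarMul.star_mul, star_star]]
  simp only [Matrix.mul_assoc]

private lemma quad_conj {n : ℕ} (A B : Matrix (Fin n) (Fin n) ℂ) (g : Fin n → ℂ) :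
    star (B *ᵥ g) ⬝ᵥ A *ᵥ (B *ᵥ g) = star g ⬝ᵥ ((star B * A * B) *ᵥ g) := by
  rw [Matrix.star_mulVec, Matrix.mulVec_mulVec]
  simp only [Matrix.dotProduct_mulVec, Matrix.vecMul_vecMul, Matrix.mul_assoc,
    Matrix.star_eq_conjTranspose]

private lemma diag_quad {n : ℕ} (d : Fin n → ℝ) (g : Fin n → ℂ) :
    star g ⬝ᵥ (Matrix.diagonal (fun i => (d i : ℂ))) *ᵥ g
      = ((∑ j, d j * Complex.normSq (g j) : ℝ) : ℂ) := by
  push_cast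
  simp only [dotProduct, Matrix.mulVec_diagonal, Pi.star_apply, Complex.star_def]
  refine Finset.sum_congr rfl fun j _ => ?_
  rw [← Complex.mul_conj]
  ring

private lemma key_row {n : ℕ} (μ a : Fin n → ℝ) (hμ : ∀ j, 0 ≤ μ j)
    (ha : ∀ j, 0 ≤ a j) (hsum : ∑ j, a j = 1)
    (h0 : ∀ j, μ j = 0 → a j = 0) (t : ℝ) (ht : 0 < t)
    (hq : t * (∑ j, a j / μ j) ^ 2 ≤ ∑ j, a j / μ j) :
    Real.log t ≤ ∑ j, a j * Real.log (μ j) := by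
  set q := ∑ j, a j / μ j with hqdef
  have hterm : ∀ j ∈ Finset.univ, (0:ℝ) ≤ a j / μ j := fun j _ => div_nonneg (ha j) (hμ j)
  have hq0 : 0 ≤ q := Finset.sum_nonneg hterm
  have hqpos : 0 < q := by
    rcases hq0.lt_or_eq with hlt | heq
    · exact hlt
    · exfalso
      have hall := (Finset.sum_eq_zero_iff_of_nonneg hterm).mp heq.symm
      have hzero : ∀ j, a j = 0 := by
        intro j
        by_cases hmu : μ j = 0
        · exact h0 j hmu
        · have := hall j (Finset.mem_univ j)
          rcases div_eq_zero_iff.mp this with h | h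
          · exact h
          · exact absurd h hmu
      rw [Finset.sum_congr rfl fun j _ => hzero j] at hsum
      simp at hsum
  have htq : t * q ≤ 1 := by nlinarith
  have key : ∀ j ∈ Finset.univ, a j * (Real.log t + 1) - t * (a j / μ j) ≤ a j * Real.log (μ j) := by
    intro j _
    by_cases hmu : μ j = 0
    · simp [hmu, h0 j hmu]
    · have hmupos : 0 < μ j := (hμ j).lt_of_ne (Ne.symm hmu)
      have h1 : Real.log (t / μ j) ≤ t / μ j - 1 :=
        Real.log_le_sub_one_of_pos (div_pos ht hmupos)
      rw [Real.log_div (ne_of_gt ht) hmu] at h1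
      have h2 : Real.log t + 1 - t / μ j ≤ Real.log (μ j) := by linarith
      have h3 := mul_le_mul_of_nonneg_left h2 (ha j)
      calc a j * (Real.log t + 1) - t * (a j / μ j)
          = a j * (Real.log t + 1 - t / μ j) := by ring
        _ ≤ a j * Real.log (μ j) := h3
  have hsum2 : ∑ j, (a j * (Real.log t + 1) - t * (a j / μ j)) = (Real.log t + 1) - t * q := by
    rw [Finset.sum_sub_distrib, ← Finset.sum_mul, hsum, ← Finset.mul_sum, one_mul]
  calc Real.log t ≤ (Real.log t + 1) - t * q := by linarith
    _ = ∑ j, (a j * (Real.log t + 1) - t * (a j / μ j)) := hsum2.symm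
    _ ≤ ∑ j, a j * Real.log (μ j) := Finset.sum_le_sum key

/-- Strong substate property bounds relative entropy. -/
theorem strong_substate_bounds_relEnt {n : ℕ} (ρ σ : Matrix (Fin n) (Fin n) ℂ)
    (hρ : IsState ρ) (hσ : IsState σ) (k : ℝ)
    (h : (σ - (((2 : ℝ) ^ (-k) : ℝ) : ℂ) • ρ).PosSemidef) :
    SuppLE ρ σ ∧ relEnt ρ σ ≤ k := by
  obtain ⟨hρP, hρT⟩ := hρ
  obtain ⟨hσP, hσT⟩ := hσ
  have hρH : ρ.IsHermitian := hρP.1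
  have hσH : σ.IsHermitian := hσP.1
  set c : ℝ := (2:ℝ) ^ (-k) with hc
  have hcpos : 0 < c := Real.rpow_pos_of_pos two_pos _
  -- Support containment
  have hsupp : SuppLE ρ σ := by
    intro v hv
    have h1 := h.dotProduct_mulVec_nonneg v
    rw [Matrix.sub_mulVec, hv, Matrix.smul_mulVec] at h1
    have h2 := hρP.dotProduct_mulVec_nonneg v
    have h3 : (0:ℂ) ≤ -((c:ℂ) * (star v ⬝ᵥ ρ *ᵥ v)) := by
      rw [show -((c:ℂ) * (star v ⬝ᵥ ρ *ᵥ v))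
          = star v ⬝ᵥ ((0:Fin n → ℂ) - (c:ℂ) • (ρ *ᵥ v)) by
        rw [zero_sub, dotProduct_neg, dotProduct_smul]; simp [smul_eq_mul]]
      exact h1
    have h4 : (c:ℂ) * (star v ⬝ᵥ ρ *ᵥ v) = 0 :=
      le_antisymm (neg_nonneg.mp h3) (mul_nonneg (by exact_mod_cast hcpos.le) h2)
    have h5 : star v ⬝ᵥ ρ *ᵥ v = 0 := by
      rcases mul_eq_zero.mp h4 with h' | h'
      · exact absurd h' (by exact_mod_cast hcpos.ne')
      · exact h'
    exact (hρP.dotProduct_mulVec_zero_iff v).mp h5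
  refine ⟨hsupp, ?_⟩
  -- spectral data
  set U : Matrix (Fin n) (Fin n) ℂ := (hρH.eigenvectorUnitary : Matrix (Fin n) (Fin n) ℂ) with hU
  set V : Matrix (Fin n) (Fin n) ℂ := (hσH.eigenvectorUnitary : Matrix (Fin n) (Fin n) ℂ) with hV
  set p : Fin n → ℝ := hρH.eigenvalues with hp
  set μ : Fin n → ℝ := hσH.eigenvalues with hmu
  set M : Matrix (Fin n) (Fin n) ℂ := star U * V with hMdef
  have hUU : star U * U = 1 := Unitary.coe_star_mul_self _
  have hUsU : U * star U = 1 := Unitary.coe_mul_star_self _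
  have hVV : star V * V = 1 := Unitary.coe_star_mul_self _
  have hVsV : V * star V = 1 := Unitary.coe_mul_star_self _
  have hρdec : ρ = U * Matrix.diagonal (fun i => ((p i : ℝ) : ℂ)) * star U := hρH.spectral_theorem
  have hσdec : σ = V * Matrix.diagonal (fun i => ((μ i : ℝ) : ℂ)) * star V := hσH.spectral_theorem
  have hpn : ∀ i, 0 ≤ p i := hρP.eigenvalues_nonneg
  have hμn : ∀ j, 0 ≤ μ j := hσP.eigenvalues_nonneg
  -- row sums of |M|² are 1
  have hstarM : star M = star V * U := by rw [hMdef, StarMul.star_mul, star_star]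
  have hMM : M * star M = 1 := by
    rw [hstarM, hMdef]
    calc star U * V * (star V * U) = star U * (V * star V) * U := by
          simp only [Matrix.mul_assoc]
      _ = 1 := by rw [hVsV, Matrix.mul_one, hUU]
  have hrow : ∀ i, ∑ j, Complex.normSq (M i j) = 1 := by
    intro i
    have h1 := congrArg (fun X : Matrix (Fin n) (Fin n) ℂ => X i i) hMM
    simp only [Matrix.mul_apply, Matrix.one_apply_eq, Matrix.star_apply] at h1
    have h2 : ((∑ j, Complex.normSq (M i j) : ℝ) : ℂ) = 1 := by
      push_cast
      rw [← h1]
      exact Finset.sum_congr rfl fun j _ => by rw [← Complex.mul_conj, Complex.star_def]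
    exact_mod_cast h2
  -- vanishing overlaps
  have hμ0 : ∀ i j, p i ≠ 0 → μ j = 0 → M i j = 0 := by
    intro i j hpi hmuj
    have hcol : σ *ᵥ ⇑(hσH.eigenvectorBasis j) = 0 := by
      rw [hσH.mulVec_eigenvectorBasis]
      rw [show hσH.eigenvalues j = μ j from rfl, hmuj]
      simp
    have hρcol : ρ *ᵥ ⇑(hσH.eigenvectorBasis j) = 0 := hsupp _ hcol
    have hbasis : ⇑(hσH.eigenvectorBasis j) = V *ᵥ Pi.single j 1 :=
      (Matrix.IsHermitian.eigenvectorUnitary_mulVec hσH j).symm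
    rw [hρdec, hbasis, Matrix.mulVec_mulVec] at hρcol
    have h5 := congrArg (fun w => (star U) *ᵥ w) hρcol
    simp only [Matrix.mulVec_mulVec, Matrix.mulVec_zero] at h5
    have heq : Matrix.diagonal (fun i => ((p i : ℝ) : ℂ)) * M
        = star U * (U * Matrix.diagonal (fun i => ((p i : ℝ) : ℂ)) * star U * V) :=
      calc Matrix.diagonal (fun i => ((p i : ℝ) : ℂ)) * M
          = (star U * U) * Matrix.diagonal (fun i => ((p i : ℝ) : ℂ)) * (star U * V) := by
            rw [hUU, Matrix.one_mul, hMdef]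
        _ = star U * (U * Matrix.diagonal (fun i => ((p i : ℝ) : ℂ)) * star U * V) := by
            simp only [Matrix.mul_assoc]
    have h6 : (Matrix.diagonal (fun i => ((p i : ℝ) : ℂ)) * M) *ᵥ Pi.single j 1 = 0 := by
      rw [heq]; exact h5
    have h7 := congrArg (fun w => w i) h6
    simp only [Matrix.mulVec_single, Matrix.diagonal_mul, mul_one, Pi.zero_apply, Pi.smul_apply, op_smul_eq_mul, Matrix.col_apply] at h7
    have h8 : (M i j : ℂ) = 0 ∨ ((p i : ℝ) : ℂ) = 0 := by
      rcases mul_eq_zero.mp h7 with h' | h'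
      · exact Or.inr h'
      · exact Or.inl h'
    rcases h8 with h' | h'
    · exact h'
    · exact absurd (by exact_mod_cast h') hpi
  -- nonnegativity of k
  have hknn : 0 ≤ k := by
    have hdiag : ∀ a, (0:ℂ) ≤ (σ - (c:ℂ) • ρ) a a := by
      intro a
      have h1 := h.dotProduct_mulVec_nonneg (Pi.single a 1)
      simpa [Matrix.mulVec_single, dotProduct, Pi.single_apply, apply_ite,
        Finset.sum_ite_eq, Finset.sum_ite_eq'] using h1
    have htr : (0:ℂ) ≤ Matrix.trace (σ - (c:ℂ) • ρ) := by
      rw [Matrix.trace]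
      exact Finset.sum_nonneg fun a _ => hdiag a
    have htr2 : Matrix.trace (σ - (c:ℂ) • ρ) = ((1 - c : ℝ) : ℂ) := by
      rw [Matrix.trace_sub, Matrix.trace_smul, hρT, hσT, smul_eq_mul, mul_one]
      push_cast; ring
    rw [htr2] at htr
    have hc1 : c ≤ 1 := by
      have : (0:ℝ) ≤ 1 - c := by exact_mod_cast htr
      linarith
    have hk0 : -k ≤ 0 := (Real.rpow_le_rpow_left_iff (y := -k) (z := 0) one_lt_two).mp
      (by rw [Real.rpow_zero]; exact hc1)
    linarith
  -- quadratic form inequality per i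
  have hkey : ∀ i, p i ≠ 0 →
      c * (p i * (∑ j, Complex.normSq (M i j) / μ j) ^ 2)
        ≤ ∑ j, Complex.normSq (M i j) / μ j := by
    intro i hpi
    set g : Fin n → ℂ := fun j => star (M i j) / (μ j : ℂ) with hg
    set w : Fin n → ℂ := V *ᵥ g with hw
    set q : ℝ := ∑ j, Complex.normSq (M i j) / μ j with hq
    have hSigV : star V * σ * V = Matrix.diagonal (fun j => ((μ j : ℝ) : ℂ)) :=
      by rw [hσdec, ← Matrix.mul_assoc, ← Matrix.mul_assoc, hVV, Matrix.one_mul, Matrix.mul_assoc, hVV, Matrix.mul_one]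
    have hRhoV : star V * ρ * V
        = star M * Matrix.diagonal (fun i => ((p i : ℝ) : ℂ)) * M := by
      rw [hρdec, hstarM, hMdef]
      simp only [Matrix.mul_assoc]
    have hS : star w ⬝ᵥ σ *ᵥ w = ((q : ℝ) : ℂ) := by
      rw [hw, quad_conj, hSigV, diag_quad, Complex.ofReal_inj, hq]
      refine Finset.sum_congr rfl fun j _ => ?_
      by_cases hmu : μ j = 0
      · simp [hg, hmu]
      · rw [hg]
        simp only []
        rw [Complex.star_def, Complex.normSq_div, Complex.normSq_conj, Complex.normSq_ofReal]
        field_simp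
    have hMg : (M *ᵥ g) i = ((q : ℝ) : ℂ) := by
      rw [hq]
      push_cast
      simp only [Matrix.mulVec, dotProduct, hg]
      refine Finset.sum_congr rfl fun j _ => ?_
      rw [Complex.star_def, ← mul_div_assoc, Complex.mul_conj]
    have hR : star w ⬝ᵥ ρ *ᵥ w
        = ((∑ l, p l * Complex.normSq ((M *ᵥ g) l) : ℝ) : ℂ) := by
      rw [hw, quad_conj, hRhoV, ← quad_conj, diag_quad]
    have hRlow : p i * q ^ 2 ≤ ∑ l, p l * Complex.normSq ((M *ᵥ g) l) := by
      have h1 : p i * Complex.normSq ((M *ᵥ g) i)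
          ≤ ∑ l, p l * Complex.normSq ((M *ᵥ g) l) :=
        Finset.single_le_sum (f := fun l => p l * Complex.normSq ((M *ᵥ g) l))
          (fun l _ => mul_nonneg (hpn l) (Complex.normSq_nonneg _)) (Finset.mem_univ i)
      rw [hMg, Complex.normSq_ofReal] at h1
      nlinarith [h1]
    have hP := h.dotProduct_mulVec_nonneg w
    rw [Matrix.sub_mulVec, Matrix.smul_mulVec, dotProduct_sub, dotProduct_smul,
      hS, hR, smul_eq_mul, ← Complex.ofReal_mul, ← Complex.ofReal_sub] at hP
    have hP2 : (0:ℝ) ≤ q - c * (∑ l, p l * Complex.normSq ((M *ᵥ g) l)) := by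
      exact_mod_cast hP
    nlinarith [mul_le_mul_of_nonneg_left hRlow hcpos.le]
  -- matrix logarithms
  have hLρ : matLog ρ
      = U * Matrix.diagonal (fun i => ((Real.log (p i) : ℝ) : ℂ)) * star U := by
    rw [matLog, dif_pos hρH]
  have hLσ : matLog σ
      = V * Matrix.diagonal (fun j => ((Real.log (μ j) : ℝ) : ℂ)) * star V := by
    rw [matLog, dif_pos hσH]
  -- trace computations
  have hTr1 : Matrix.trace (ρ * matLog ρ)
      = ((∑ i, p i * Real.log (p i) : ℝ) : ℂ) := by
    rw [hLρ]
    conv_lhs => rw [hρdec]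
    rw [trace_sandwich, hUU]
    simp only [Matrix.one_apply, apply_ite Complex.normSq, Complex.normSq_one,
      Complex.normSq_zero, apply_ite (fun r : ℝ => (r : ℂ)), Complex.ofReal_one,
      Complex.ofReal_zero, mul_ite, mul_one, mul_zero, Finset.sum_ite_eq,
      Finset.sum_ite_eq', Finset.mem_univ, if_true]
    push_cast
    rfl
  have hTr2 : Matrix.trace (ρ * matLog σ)
      = ((∑ i, ∑ j, p i * Real.log (μ j) * Complex.normSq (M i j) : ℝ) : ℂ) := by
    rw [hLσ]
    conv_lhs => rw [hρdec]
    rw [trace_sandwich, ← hMdef]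
    push_cast
    rfl
  -- sum of eigenvalues of ρ is 1
  have hpsum : ∑ i, p i = 1 := by
    have h1 : Matrix.trace ρ = ((∑ i, p i : ℝ) : ℂ) := by
      conv_lhs => rw [hρdec]
      rw [Matrix.trace_mul_cycle, hUU, Matrix.one_mul, Matrix.trace_diagonal]
      push_cast
      rfl
    rw [hρT] at h1
    exact_mod_cast h1.symm
  -- per-i entropic bound
  have hib : ∀ i, p i * Real.log (p i) - p i * (k * Real.log 2)
      ≤ p i * (∑ j, Complex.normSq (M i j) * Real.log (μ j)) := by
    intro i
    by_cases hpi : p i = 0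
    · simp [hpi]
    · have hppos : 0 < p i := (hpn i).lt_of_ne (Ne.symm hpi)
      have hkr := key_row μ (fun j => Complex.normSq (M i j)) hμn
        (fun j => Complex.normSq_nonneg _) (hrow i)
        (fun j hj => by show Complex.normSq (M i j) = 0; rw [hμ0 i j hpi hj]; simp) (c * p i) (mul_pos hcpos hppos)
        (by have := hkey i hpi; nlinarith [this])
      have hlog : Real.log (c * p i) = Real.log (p i) - k * Real.log 2 := by
        rw [Real.log_mul hcpos.ne' hpi, hc, Real.log_rpow two_pos]
        ring
      rw [hlog] at hkr
      calc p i * Real.log (p i) - p i * (k * Real.log 2)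
          = p i * (Real.log (p i) - k * Real.log 2) := by ring
        _ ≤ p i * (∑ j, Complex.normSq (M i j) * Real.log (μ j)) :=
            mul_le_mul_of_nonneg_left hkr (hpn i)
  have hsum3 : (∑ i, p i * Real.log (p i)) - k * Real.log 2
      ≤ ∑ i, ∑ j, p i * Real.log (μ j) * Complex.normSq (M i j) := by
    calc (∑ i, p i * Real.log (p i)) - k * Real.log 2
        = ∑ i, (p i * Real.log (p i) - p i * (k * Real.log 2)) := by
          rw [Finset.sum_sub_distrib, ← Finset.sum_mul, hpsum, one_mul]
      _ ≤ ∑ i, p i * (∑ j, Complex.normSq (M i j) * Real.log (μ j)) :=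
          Finset.sum_le_sum fun i _ => hib i
      _ = ∑ i, ∑ j, p i * Real.log (μ j) * Complex.normSq (M i j) := by
          refine Finset.sum_congr rfl fun i _ => ?_
          rw [Finset.mul_sum]
          exact Finset.sum_congr rfl fun j _ => by ring
  have hrel : relEnt ρ σ = (∑ i, p i * Real.log (p i))
      - ∑ i, ∑ j, p i * Real.log (μ j) * Complex.normSq (M i j) := by
    rw [relEnt, mul_sub, Matrix.trace_sub, hTr1, hTr2, ← Complex.ofReal_sub,
      Complex.ofReal_re]
  rw [hrel]
  have hlog2 : Real.log 2 ≤ 1 := by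
    have := Real.log_le_sub_one_of_pos (by norm_num : (0:ℝ) < 2)
    linarith
  have hlog2' : 0 ≤ Real.log 2 := Real.log_nonneg one_le_two
  nlinarith [hsum3]


end
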